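/- For every m ∈ ℕ there exists a finite set B of finite tournaments such that for every finite tournament T: i(T) ≤ m if and only if no member of B embeds into T. (The class of finite tournaments of inversion index at most m has only finitely many bounds up to isomorphism.) -/

import Mathlib

/-- A tournament on a vertex set `V`: a loopless directed graph such that for all
distinct `x, y` exactly one of `(x,y)`, `(y,x)` is an arc. -/
structure Tournament (V : Type*) where
  rel : V → V → Prop
  irrefl : ∀ x, ¬ rel x x
  total : ∀ x y, x ≠ y → rel x y ∨ rel y x
  asymm : ∀ x y, rel x y → ¬ rel y x

namespace Tournament

variable {V : Type*} {W : Type*}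

/-- The tournament obtained from `T` by reversing all arcs both of whose
endpoints lie in `X`. -/
def inv (T : Tournament V) (X : Set V) : Tournament V where
  rel x y := (x ∈ X ∧ y ∈ X ∧ T.rel y x) ∨ ((x ∉ X ∨ y ∉ X) ∧ T.rel x y)
  irrefl x := by have := T.irrefl x; tauto
  total x y hxy := by
    have := T.total x y hxy
    by_cases hx : x ∈ X <;> by_cases hy : y ∈ X <;> tauto
  asymm x y := by have h1 := T.asymm x y; have h2 := T.asymm y x; tauto

/-- Successive inversions along a finite sequence of subsets (`X_0` first). -/
def invSeq (T : Tournament V) (Xs : List (Set V)) : Tournament V :=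
  Xs.foldl Tournament.inv T

/-- A tournament is acyclic (transitive) when its arc relation is transitive,
i.e. a strict linear order. -/
def IsAcyclic (T : Tournament V) : Prop :=
  ∀ x y z, T.rel x y → T.rel y z → T.rel x z

/-- The inversion index: the least number of subsets to be inverted to reach an
acyclic tournament. -/
noncomputable def index (T : Tournament V) : ℕ :=
  sInf {m | ∃ Xs : List (Set V), Xs.length = m ∧ (T.invSeq Xs).IsAcyclic}

/-- Induced subtournament on a set of vertices. -/
def restrict (T : Tournament V) (A : Set V) : Tournament A where
  rel x y := T.rel x y
  irrefl x := T.irrefl x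
  total x y hxy := T.total x y (fun h => hxy (Subtype.ext h))
  asymm x y := T.asymm x y

/-- `T − x`: the subtournament induced on `V ∖ {x}`. -/
def erase (T : Tournament V) (x : V) : Tournament {y : V // y ≠ x} :=
  T.restrict {y | y ≠ x}

/-- `S` embeds into `T`: `S` is isomorphic to the subtournament of `T` induced on
some subset of the vertices of `T`. -/
def Embeds (S : Tournament V) (T : Tournament W) : Prop :=
  ∃ f : V → W, Function.Injective f ∧ ∀ x y, S.rel x y ↔ T.rel (f x) (f y)

/-- Isomorphism of tournaments. -/
def Iso (S : Tournament V) (T : Tournament W) : Prop :=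
  ∃ e : V ≃ W, ∀ x y, S.rel x y ↔ T.rel (e x) (e y)

/-- The dual tournament, obtained by reversing all arcs. -/
def dual (T : Tournament V) : Tournament V where
  rel x y := T.rel y x
  irrefl x := T.irrefl x
  total x y hxy := (T.total x y hxy).symm
  asymm x y h := T.asymm y x h

/-- `X` is an interval of `T`. -/
def IsInterval (T : Tournament V) (X : Set V) : Prop :=
  ∀ y ∉ X, (∀ x ∈ X, T.rel x y) ∨ (∀ x ∈ X, T.rel y x)

/-- A tournament is indecomposable when all its intervals are trivial. -/
def Indecomposable (T : Tournament V) : Prop :=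
  ∀ X : Set V, T.IsInterval X → X = ∅ ∨ X = Set.univ ∨ ∃ x, X = {x}

end Tournament

/-- The transitive tournament `n̲` on `{0, …, n−1}`, with arcs `(i,j)` for `i < j`. -/
def linear (n : ℕ) : Tournament (Fin n) where
  rel x y := x < y
  irrefl x := lt_irrefl x
  total _ _ h := lt_or_gt_of_ne h
  asymm _ _ h := lt_asymm h

/-- `2ℕ_{<k} = {0, 2, …, 2(k−1)}` as a subset of `Fin N`. -/
def evensLT {N : ℕ} (k : ℕ) : Set (Fin N) := {i | (i : ℕ) % 2 = 0 ∧ (i : ℕ) < 2 * k}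

/-- `2ℕ_{<k}+1 = {1, 3, …, 2k−1}` as a subset of `Fin N`. -/
def oddsLT {N : ℕ} (k : ℕ) : Set (Fin N) := {i | (i : ℕ) % 2 = 1 ∧ (i : ℕ) < 2 * k}
/- ===== Auxiliary development ===== -/
attribute [local instance] Classical.propDecidable

namespace Tournament

variable {V : Type*} {W : Type*}

theorem rel_ext {T S : Tournament V} (h : T.rel = S.rel) : T = S := by
  cases T; cases S; simp_all

theorem rel_comm {T : Tournament V} {x y : V} (hxy : x ≠ y) :
    T.rel y x ↔ ¬ T.rel x y :=
  ⟨T.asymm y x, fun h => (T.total x y hxy).resolve_left h⟩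

/-- Number of sets in `Xs` containing both `x` and `y`. -/
noncomputable def flips (Xs : List (Set V)) (x y : V) : ℕ :=
  (Xs.map fun X => if x ∈ X ∧ y ∈ X then 1 else 0).sum

@[simp] theorem flips_nil (x y : V) : flips ([] : List (Set V)) x y = 0 := rfl

theorem flips_cons (X : Set V) (Xs : List (Set V)) (x y : V) :
    flips (X :: Xs) x y = (if x ∈ X ∧ y ∈ X then 1 else 0) + flips Xs x y := rfl

@[simp] theorem invSeq_nil (T : Tournament V) : T.invSeq [] = T := rfl

theorem invSeq_cons (T : Tournament V) (X : Set V) (Xs : List (Set V)) :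
    T.invSeq (X :: Xs) = (T.inv X).invSeq Xs := rfl

theorem invSeq_append (T : Tournament V) (Xs Ys : List (Set V)) :
    T.invSeq (Xs ++ Ys) = (T.invSeq Xs).invSeq Ys :=
  List.foldl_append

theorem inv_empty (T : Tournament V) : T.inv (∅ : Set V) = T := by
  apply rel_ext
  funext x y
  simp only [inv, Set.mem_empty_iff_false]
  rw [eq_iff_iff]
  tauto

theorem invSeq_replicate_empty (T : Tournament V) (k : ℕ) :
    T.invSeq (List.replicate k (∅ : Set V)) = T := by
  induction k with
  | zero => rfl
  | succ n ih => rw [List.replicate_succ, invSeq_cons, inv_empty]; exact ih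

theorem inv_rel_iff {T : Tournament V} {X : Set V} {x y : V} (hxy : x ≠ y) :
    (T.inv X).rel x y ↔ (T.rel x y ↔ ¬ (x ∈ X ∧ y ∈ X)) := by
  have h1 := rel_comm (T := T) hxy
  simp only [inv]
  by_cases hx : x ∈ X <;> by_cases hy : y ∈ X <;> tauto

theorem invSeq_rel_iff {T : Tournament V} {Xs : List (Set V)} {x y : V} (hxy : x ≠ y) :
    (T.invSeq Xs).rel x y ↔ (T.rel x y ↔ Even (flips Xs x y)) := by
  induction Xs generalizing T with
  | nil => simp only [invSeq_nil, flips_nil, Even.zero, iff_true]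
  | cons X Xs ih =>
    rw [invSeq_cons, ih, flips_cons, inv_rel_iff hxy]
    by_cases h : x ∈ X ∧ y ∈ X
    · simp only [if_pos h, Nat.even_add_one]
      constructor
      · intro hh
        constructor
        · intro hr
          simp only [Nat.even_add] at *
          tauto
        · intro he; by_contra hr
          simp only [Nat.even_add] at *
          tauto
      · intro hh
        constructor
        · intro hr
          simp only [Nat.even_add] at *
          tauto
        · intro he; by_contra hr
          simp only [Nat.even_add] at *
          tauto
    · simp only [if_neg h, Nat.zero_add]
      tauto

end Tournament
namespace Tournament

variable {V : Type*} {W : Type*}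

theorem flips_ofFn {k : ℕ} (g : Fin k → Set V) (x y : V) :
    flips (List.ofFn g) x y
      = ((Finset.univ : Finset (Fin k)).filter fun i => x ∈ g i ∧ y ∈ g i).card := by
  rw [flips, List.map_ofFn, List.sum_ofFn]
  rw [Finset.card_eq_sum_ones, Finset.sum_filter]
  rfl

theorem flips_eq_card (Xs : List (Set V)) (x y : V) :
    flips Xs x y
      = ((Finset.univ : Finset (Fin Xs.length)).filter
          fun i => x ∈ Xs.get i ∧ y ∈ Xs.get i).card := by
  conv_lhs => rw [← List.ofFn_get Xs]
  rw [flips_ofFn]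

/-- `T` is encoded by the word `w` with decoder `D`. -/
def Encodes {A : Type*} (D : A → A → Prop) (w : List A) (T : Tournament V) : Prop :=
  ∃ f : V → Fin w.length, Function.Bijective f ∧ ∀ x y, T.rel x y ↔
    ((f x < f y ∧ D (w.get (f x)) (w.get (f y)))
      ∨ (f y < f x ∧ ¬ D (w.get (f y)) (w.get (f x))))

/-- Decoder for the inversion-index alphabet. -/
def Dm (m : ℕ) (a b : Fin m → Prop) : Prop :=
  Even ((Finset.univ.filter fun i => a i ∧ b i).card)

theorem Dm_symm {m : ℕ} (a b : Fin m → Prop) : Dm m a b ↔ Dm m b a := by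
  unfold Dm
  rw [Finset.filter_congr (fun i _ => and_comm (a := a i) (b := b i))]

/-- An acyclic tournament is characterized by positions. -/
theorem isAcyclic_of_lt {T : Tournament V} {f : V → ℕ}
    (h : ∀ x y, x ≠ y → (T.rel x y ↔ f x < f y)) : T.IsAcyclic := by
  intro x y z hxy hyz
  have hxy' : x ≠ y := fun e => T.irrefl x (e ▸ hxy)
  have hyz' : y ≠ z := fun e => T.irrefl y (e ▸ hyz)
  have h1 := (h x y hxy').1 hxy
  have h2 := (h y z hyz').1 hyz
  have hxz : f x < f z := lt_trans h1 h2
  exact (h x z (fun e => absurd (e ▸ hxz) (lt_irrefl _))).2 hxz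

theorem index_le_of_encodes {m : ℕ} [Fintype V] {T : Tournament V}
    {w : List (Fin m → Prop)} (h : Encodes (Dm m) w T) :
    T.index ≤ m := by
  obtain ⟨f, hbij, hrel⟩ := h
  set Xs : List (Set V) := List.ofFn (fun i : Fin m => {x : V | w.get (f x) i}) with hXs
  have hlen : Xs.length = m := List.length_ofFn
  have key : ∀ x y : V, x ≠ y → ((T.invSeq Xs).rel x y ↔ f x < f y) := by
    intro x y hxy
    rw [invSeq_rel_iff hxy]
    have hflip : Even (flips Xs x y) ↔ Dm m (w.get (f x)) (w.get (f y)) := by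
      rw [hXs, flips_ofFn, Dm]
      constructor <;> intro hh <;> convert hh using 2 <;>
        exact Finset.filter_congr (fun i _ => Iff.rfl)
    have hfxy : f x ≠ f y := fun e => hxy (hbij.1 e)
    rcases lt_or_gt_of_ne hfxy with hlt | hgt
    · have : T.rel x y ↔ Dm m (w.get (f x)) (w.get (f y)) := by
        rw [hrel x y]
        constructor
        · rintro (⟨_, hd⟩ | ⟨hba, _⟩)
          · exact hd
          · exact absurd (lt_trans hlt hba) (lt_irrefl _)
        · intro hd; exact Or.inl ⟨hlt, hd⟩
      rw [this, hflip]
      simp only [hlt, iff_true]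
    · have : T.rel x y ↔ ¬ Dm m (w.get (f y)) (w.get (f x)) := by
        rw [hrel x y]
        constructor
        · rintro (⟨hab, _⟩ | ⟨_, hd⟩)
          · exact absurd (lt_trans hab hgt) (lt_irrefl _)
          · exact hd
        · intro hd; exact Or.inr ⟨hgt, hd⟩
      rw [this, hflip, Dm_symm]
      exact iff_of_false (by tauto) (not_lt.mpr (le_of_lt hgt))
  have hac : (T.invSeq Xs).IsAcyclic := by
    apply isAcyclic_of_lt (f := fun x => (f x : ℕ))
    intro x y hxy
    rw [key x y hxy, Fin.lt_def]
  calc T.index ≤ Xs.length := Nat.sInf_le ⟨Xs, rfl, hac⟩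
    _ = m := hlen

end Tournament
namespace Tournament

variable {V : Type*}

theorem exists_acyclic_invSeq [Fintype V] (T : Tournament V) :
    ∃ Xs : List (Set V), (T.invSeq Xs).IsAcyclic := by
  obtain ⟨f, hf⟩ : ∃ f : V → ℕ, Function.Injective f :=
    ⟨fun x => ((Fintype.equivFin V) x : ℕ), fun a b h =>
      (Fintype.equivFin V).injective (Fin.val_injective h)⟩
  let bad : Tournament V → Finset (V × V) := fun S =>
    Finset.univ.filter fun p => f p.1 < f p.2 ∧ ¬ S.rel p.1 p.2
  suffices h : ∀ (n : ℕ) (S : Tournament V), (bad S).card ≤ n →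
      ∃ Xs : List (Set V), (S.invSeq Xs).IsAcyclic from h (bad T).card T le_rfl
  intro n
  induction n with
  | zero =>
    intro S hS
    refine ⟨[], isAcyclic_of_lt (f := f) ?_⟩
    intro x y hxy
    have hbad : ∀ p : V × V, p ∉ bad S := by
      intro p hp
      have := Finset.card_pos.mpr ⟨p, hp⟩
      omega
    constructor
    · intro hr
      rcases lt_or_gt_of_ne (fun e : f x = f y => hxy (hf e)) with h1 | h1
      · exact h1
      · exact absurd (Finset.mem_filter.mpr
          ⟨Finset.mem_univ _, h1, S.asymm x y hr⟩) (hbad (y, x))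
    · intro hlt
      by_contra hr
      exact absurd (Finset.mem_filter.mpr ⟨Finset.mem_univ _, hlt, hr⟩) (hbad (x, y))
  | succ n ih =>
    intro S hS
    by_cases hcard : (bad S).card ≤ n
    · exact ih S hcard
    · obtain ⟨⟨a, b⟩, hab⟩ := Finset.card_pos.mp (by omega : 0 < (bad S).card)
      have habS := hab
      simp only [bad, Finset.mem_filter, Finset.mem_univ, true_and] at hab
      obtain ⟨hfab, hnab⟩ := hab
      have hne : a ≠ b := fun e => absurd (e ▸ hfab) (lt_irrefl _)
      have haX : a ∈ ({a, b} : Set V) := Or.inl rfl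
      have hbX : b ∈ ({a, b} : Set V) := Or.inr rfl
      have hrel_ab : (S.inv {a, b}).rel a b :=
        (inv_rel_iff hne).mpr (iff_of_false hnab (fun h => h ⟨haX, hbX⟩))
      have hsub : bad (S.inv {a, b}) ⊆ (bad S).erase (a, b) := by
        rintro ⟨x, y⟩ hp
        simp only [bad, Finset.mem_filter, Finset.mem_univ, true_and] at hp
        obtain ⟨hfxy, hnxy⟩ := hp
        have hxyne : x ≠ y := fun e => absurd (e ▸ hfxy) (lt_irrefl _)
        have hpab : (x, y) ≠ (a, b) := by
          rintro e
          rw [Prod.ext_iff] at e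
          obtain ⟨rfl, rfl⟩ := e
          exact hnxy hrel_ab
        refine Finset.mem_erase.mpr ⟨hpab, ?_⟩
        simp only [bad, Finset.mem_filter, Finset.mem_univ, true_and]
        refine ⟨hfxy, ?_⟩
        intro hr
        by_cases hboth : x ∈ ({a, b} : Set V) ∧ y ∈ ({a, b} : Set V)
        · have hx : x = a ∨ x = b := by simpa using hboth.1
          have hy : y = a ∨ y = b := by simpa using hboth.2
          rcases hx with rfl | rfl <;> rcases hy with rfl | rfl
          · exact hxyne rfl
          · exact hpab rfl
          · exact absurd hfab (by omega)
          · exact hxyne rfl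
        · exact hnxy ((inv_rel_iff hxyne).mpr (iff_of_true hr hboth))
      have hcard' : (bad (S.inv {a, b})).card ≤ n := by
        have h1 := Finset.card_le_card hsub
        have h2 := Finset.card_erase_of_mem habS
        omega
      obtain ⟨Xs, hXs⟩ := ih (S.inv {a, b}) hcard'
      exact ⟨{a, b} :: Xs, by rwa [invSeq_cons]⟩

theorem ofFn_get_cast {α : Type*} {l : List α} {k : ℕ} (h : l.length = k) :
    List.ofFn (fun i : Fin k => l.get (Fin.cast h.symm i)) = l := by
  subst h
  exact List.ofFn_get l

set_option maxHeartbeats 1000000 in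
theorem exists_encodes_of_index_le [Fintype V] {T : Tournament V} {m : ℕ}
    (h : T.index ≤ m) :
    ∃ w : List (Fin m → Prop), Encodes (Dm m) w T := by
  obtain ⟨Xs₀, hac₀⟩ := exists_acyclic_invSeq T
  have hne : {k | ∃ Xs : List (Set V), Xs.length = k ∧ (T.invSeq Xs).IsAcyclic}.Nonempty :=
    ⟨Xs₀.length, Xs₀, rfl, hac₀⟩
  obtain ⟨Xs, hlenXs, hac⟩ := Nat.sInf_mem hne
  have hidx : Xs.length = T.index := hlenXs
  -- pad to length m
  set Xs' : List (Set V) := Xs ++ List.replicate (m - T.index) ∅ with hXs'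
  have hlen' : Xs'.length = m := by
    rw [hXs', List.length_append, List.length_replicate, hidx]
    omega
  have hac' : (T.invSeq Xs').IsAcyclic := by
    rw [hXs', invSeq_append, invSeq_replicate_empty]
    exact hac
  set R := T.invSeq Xs' with hR
  set G : Fin m → Set V := fun i => Xs'.get (Fin.cast hlen'.symm i) with hG
  have hGXs : List.ofFn G = Xs' := ofFn_get_cast hlen'
  set ℓ : V → (Fin m → Prop) := fun x i => x ∈ G i with hℓ
  have hDflip : ∀ a b : V, (Even (flips Xs' a b) ↔ Dm m (ℓ a) (ℓ b)) := by
    intro a b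
    rw [← hGXs, flips_ofFn]
    have heq : (Finset.univ.filter fun i => a ∈ G i ∧ b ∈ G i)
        = (Finset.univ.filter fun i : Fin m => ℓ a i ∧ ℓ b i) :=
      Finset.filter_congr (fun i _ => Iff.rfl)
    rw [heq]
    exact Iff.rfl
  -- position function
  set pred : V → Finset V := fun x => Finset.univ.filter fun y => R.rel y x with hpred
  set g : V → ℕ := fun x => (pred x).card with hg
  have hmono : ∀ x y, R.rel x y → g x < g y := by
    intro x y hxy
    apply Finset.card_lt_card
    constructor
    · intro z hz
      simp only [hpred, Finset.mem_filter, Finset.mem_univ, true_and] at hz ⊢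
      exact hac' z x y hz hxy
    · intro hsub
      have hx : x ∈ pred y := by
        simp only [hpred, Finset.mem_filter, Finset.mem_univ, true_and]
        exact hxy
      have := hsub hx
      simp only [hpred, Finset.mem_filter, Finset.mem_univ, true_and] at this
      exact R.irrefl x this
  have hiff : ∀ x y, x ≠ y → (R.rel x y ↔ g x < g y) := by
    intro x y hxy
    refine ⟨hmono x y, fun hlt => ?_⟩
    by_contra hr
    exact absurd (hmono y x ((rel_comm hxy).mpr hr)) (by omega)
  set n := Fintype.card V with hn
  have hglt : ∀ x, g x < n := by
    intro x
    have hs : pred x ⊆ Finset.univ.erase x := by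
      intro z hz
      simp only [hpred, Finset.mem_filter, Finset.mem_univ, true_and] at hz
      exact Finset.mem_erase.mpr ⟨fun e => R.irrefl x (e ▸ hz), Finset.mem_univ z⟩
    have h1 := Finset.card_le_card hs
    have h2 : (Finset.univ.erase x).card = n - 1 := by
      rw [Finset.card_erase_of_mem (Finset.mem_univ x), Finset.card_univ]
    have hpos : 0 < n := Fintype.card_pos_iff.mpr ⟨x⟩
    have h3 : g x = (pred x).card := rfl
    omega
  set f : V → Fin n := fun x => ⟨g x, hglt x⟩ with hfd
  have hginj : Function.Injective g := by
    intro x y he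
    by_contra hxy
    rcases R.total x y hxy with h1 | h1
    · exact absurd (hmono x y h1) (by omega)
    · exact absurd (hmono y x h1) (by omega)
  have hfbij : Function.Bijective f :=
    (Fintype.bijective_iff_injective_and_card f).mpr
      ⟨fun a b e => hginj (congrArg Fin.val e), by simp [hn]⟩
  set e : V ≃ Fin n := Equiv.ofBijective f hfbij with he
  set u : Fin n → (Fin m → Prop) := fun i => ℓ (e.symm i) with hu
  have hwlen : (List.ofFn u).length = n := List.length_ofFn
  refine ⟨List.ofFn u, fun x => Fin.cast hwlen.symm (f x), ?_, ?_⟩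
  · exact (finCongr hwlen.symm).bijective.comp hfbij
  · have hget : ∀ x, (List.ofFn u).get (Fin.cast hwlen.symm (f x)) = ℓ x := by
      intro x
      rw [List.get_ofFn]
      have h1 : (Fin.cast (by simp) (Fin.cast hwlen.symm (f x)) : Fin n) = f x :=
        Fin.ext rfl
      rw [h1, hu]
      calc ℓ (e.symm (f x)) = ℓ (e.symm (e x)) := rfl
        _ = ℓ x := by rw [e.symm_apply_apply]
    intro x y
    rcases eq_or_ne x y with rfl | hxy
    · simp only [lt_irrefl, false_and, or_self, iff_false]
      exact T.irrefl x
    · have hlt1 : ∀ a b : V, ((Fin.cast hwlen.symm (f a) : Fin (List.ofFn u).length)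
          < Fin.cast hwlen.symm (f b)) ↔ g a < g b := by
        intro a b
        simp only [Fin.lt_def, Fin.coe_cast]
        exact Iff.rfl
      have h1 : g x < g y ↔ (T.rel x y ↔ Dm m (ℓ x) (ℓ y)) := by
        rw [← hiff x y hxy, invSeq_rel_iff hxy, hDflip]
      have h2 : g y < g x ↔ (T.rel y x ↔ Dm m (ℓ y) (ℓ x)) := by
        rw [← hiff y x hxy.symm, invSeq_rel_iff hxy.symm, hDflip]
      have h3 : g x < g y ∨ g y < g x :=
        lt_or_gt_of_ne (fun q => hxy (hginj q))
      have h4 : ¬ (g x < g y ∧ g y < g x) := by omega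
      have h5 : Dm m (ℓ y) (ℓ x) ↔ Dm m (ℓ x) (ℓ y) := Dm_symm _ _
      have h6 : T.rel y x ↔ ¬ T.rel x y := rel_comm hxy
      rw [h6] at h2
      simp only [hget, hlt1]
      tauto

end Tournament
namespace Tournament

variable {V : Type*} {W : Type*} {U : Type*}

theorem flips_map_preimage (f : V → W) (Xs : List (Set W)) (x y : V) :
    flips (Xs.map fun X => f ⁻¹' X) x y = flips Xs (f x) (f y) := by
  induction Xs with
  | nil => rfl
  | cons X Xs ih =>
    rw [List.map_cons, flips_cons, flips_cons, ih]
    congr 1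

theorem index_le_of_embeds [Fintype W] {S : Tournament V} {T : Tournament W}
    (h : S.Embeds T) : S.index ≤ T.index := by
  obtain ⟨f, hinj, hrel⟩ := h
  obtain ⟨Xs₀, hac₀⟩ := exists_acyclic_invSeq T
  have hne : {k | ∃ Xs : List (Set W), Xs.length = k ∧ (T.invSeq Xs).IsAcyclic}.Nonempty :=
    ⟨Xs₀.length, Xs₀, rfl, hac₀⟩
  obtain ⟨Xs, hlenXs, hac⟩ := Nat.sInf_mem hne
  set Xs' : List (Set V) := Xs.map fun X => f ⁻¹' X with hXs'
  have hclaim : ∀ x y, (S.invSeq Xs').rel x y ↔ (T.invSeq Xs).rel (f x) (f y) := by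
    intro x y
    rcases eq_or_ne x y with rfl | hxy
    · exact iff_of_false ((S.invSeq Xs').irrefl x) ((T.invSeq Xs).irrefl (f x))
    · have hfne : f x ≠ f y := fun q => hxy (hinj q)
      rw [invSeq_rel_iff hxy, invSeq_rel_iff hfne, hXs', flips_map_preimage, hrel]
  have hac' : (S.invSeq Xs').IsAcyclic := by
    intro x y z h1 h2
    rw [hclaim] at h1 h2 ⊢
    exact hac _ _ _ h1 h2
  calc S.index ≤ Xs'.length := Nat.sInf_le ⟨Xs', rfl, hac'⟩
    _ = Xs.length := List.length_map _
    _ = T.index := hlenXs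

theorem get_ofFn_cast {α : Type*} {k : ℕ} (u : Fin k → α)
    (hl : (List.ofFn u).length = k) (i : Fin k) :
    (List.ofFn u).get (Fin.cast hl.symm i) = u i := by
  have h1 : (Fin.cast (by simp) (Fin.cast hl.symm i) : Fin k) = i := Fin.ext rfl
  rw [List.get_ofFn, h1]

theorem embeds_of_encodes_sublist {A : Type*} {D : A → A → Prop}
    {S : Tournament V} {T : Tournament W} {w w' : List A}
    (hS : Encodes D w S) (hT : Encodes D w' T) (hsub : List.Sublist w w') : S.Embeds T := by
  obtain ⟨φ, hφ⟩ := List.sublist_iff_exists_fin_orderEmbedding_get_eq.mp hsub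
  obtain ⟨f, hbf, hrelS⟩ := hS
  obtain ⟨f', hbf', hrelT⟩ := hT
  set e := Equiv.ofBijective f' hbf' with he
  refine ⟨fun x => e.symm (φ (f x)), ?_, ?_⟩
  · exact e.symm.injective.comp (φ.injective.comp hbf.1)
  · intro x y
    have hfe : ∀ z : Fin w'.length, f' (e.symm z) = z := fun z => e.apply_symm_apply z
    rw [hrelS x y, hrelT]
    rw [hfe, hfe, ← hφ, ← hφ]
    constructor
    · rintro (⟨h1, h2⟩ | ⟨h1, h2⟩)
      · exact Or.inl ⟨φ.lt_iff_lt.mpr h1, h2⟩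
      · exact Or.inr ⟨φ.lt_iff_lt.mpr h1, h2⟩
    · rintro (⟨h1, h2⟩ | ⟨h1, h2⟩)
      · exact Or.inl ⟨φ.lt_iff_lt.mp h1, h2⟩
      · exact Or.inr ⟨φ.lt_iff_lt.mp h1, h2⟩

/-- Extended decoder handling one extra vertex placed last. -/
def extendD {A : Type*} (D : A → A → Prop) :
    Option (A × Prop) → Option (A × Prop) → Prop := fun x y =>
  match x, y with
  | some a, some b => D a.1 b.1
  | some a, none => a.2
  | none, _ => True

theorem encodes_extend {A : Type*} {D : A → A → Prop} {T : Tournament V} {v : V}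
    {w : List A} (h : Encodes D w (T.erase v)) :
    ∃ w' : List (Option (A × Prop)), Encodes (extendD D) w' T := by
  obtain ⟨f, hbij, hrel⟩ := h
  set e := Equiv.ofBijective f hbij with he
  set u : Fin (w.length + 1) → Option (A × Prop) := fun i =>
    if hi : (i : ℕ) < w.length then
      some (w.get ⟨i, hi⟩, T.rel (e.symm ⟨i, hi⟩).val v)
    else none with hu
  have hw' : (List.ofFn u).length = w.length + 1 := List.length_ofFn
  set F : V → Fin (w.length + 1) := fun x =>
    if h : x = v then Fin.last w.length else (f ⟨x, h⟩).castSucc with hF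
  have hFv : F v = Fin.last w.length := by simp [hF]
  have hFx : ∀ (x : V) (hx : x ≠ v), F x = (f ⟨x, hx⟩).castSucc := by
    intro x hx; simp [hF, hx]
  have hletter : ∀ (x : V) (hx : x ≠ v),
      u (F x) = some (w.get (f ⟨x, hx⟩), T.rel x v) := by
    intro x hx
    rw [hFx x hx]
    simp only [hu]
    have hlt : ((f ⟨x, hx⟩).castSucc : ℕ) < w.length := (f ⟨x, hx⟩).isLt
    rw [dif_pos hlt]
    have h1 : (⟨((f ⟨x, hx⟩).castSucc : ℕ), hlt⟩ : Fin w.length) = f ⟨x, hx⟩ :=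
      Fin.ext rfl
    rw [h1]
    congr 2
    rw [he, Equiv.ofBijective_symm_apply_apply]
  have hletterv : u (F v) = none := by
    rw [hFv]
    simp only [hu]
    rw [dif_neg (by rw [Fin.val_last]; omega : ¬ ((Fin.last w.length : ℕ) < w.length))]
  have hFinj : Function.Injective F := by
    intro x y hxy
    by_cases hx : x = v <;> by_cases hy : y = v
    · rw [hx, hy]
    · rw [hx, hFv, hFx y hy] at hxy
      exact absurd hxy.symm (Fin.castSucc_lt_last _).ne
    · rw [hy, hFv, hFx x hx] at hxy
      exact absurd hxy (Fin.castSucc_lt_last _).ne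
    · rw [hFx x hx, hFx y hy] at hxy
      have := hbij.1 (Fin.castSucc_injective _ hxy)
      exact congrArg Subtype.val this
  have hFsurj : Function.Surjective F := by
    intro j
    by_cases hj : (j : ℕ) < w.length
    · refine ⟨(e.symm ⟨j, hj⟩).val, ?_⟩
      have hne : (e.symm ⟨j, hj⟩).val ≠ v := (e.symm ⟨j, hj⟩).2
      rw [hFx _ hne]
      have h1 : (⟨(e.symm ⟨j, hj⟩).val, hne⟩ : {y : V // y ≠ v}) = e.symm ⟨j, hj⟩ :=
        Subtype.ext rfl
      rw [h1]
      have h2 : f (e.symm ⟨j, hj⟩) = ⟨j, hj⟩ := e.apply_symm_apply ⟨j, hj⟩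
      rw [h2]
      exact Fin.ext rfl
    · refine ⟨v, ?_⟩
      rw [hFv]
      have hjlt := j.isLt
      have hj' : (j : ℕ) = w.length := by omega
      exact Fin.ext (by rw [Fin.val_last, hj'])
  refine ⟨List.ofFn u, fun x => Fin.cast hw'.symm (F x), ?_, ?_⟩
  · exact (finCongr hw'.symm).bijective.comp ⟨hFinj, hFsurj⟩
  · intro x y
    have hcast : ∀ z : V, (List.ofFn u).get (Fin.cast hw'.symm (F z)) = u (F z) :=
      fun z => get_ofFn_cast u hw' (F z)
    have hltFF : ∀ a b : V, ((Fin.cast hw'.symm (F a) : Fin (List.ofFn u).length)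
        < Fin.cast hw'.symm (F b)) ↔ F a < F b := by
      intro a b
      simp only [Fin.lt_def, Fin.coe_cast]
    rcases eq_or_ne x y with rfl | hxy
    · refine iff_of_false (T.irrefl x) ?_
      rintro (⟨h1, _⟩ | ⟨h1, _⟩) <;> exact lt_irrefl _ h1
    · by_cases hx : x = v <;> by_cases hy : y = v
      · exact absurd (hx.trans hy.symm) hxy
      · -- x = v, y ≠ v
        have hvy : v ≠ y := hx ▸ hxy
        rw [show x = v from hx]
        rw [hcast, hcast, hltFF v y, hltFF y v, hletterv, hletter y hy, hFv, hFx y hy]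
        have h1 : ¬ (Fin.last w.length < (f ⟨y, hy⟩).castSucc) :=
          not_lt.mpr (Fin.castSucc_lt_last _).le
        have h2 : (f ⟨y, hy⟩).castSucc < Fin.last w.length := Fin.castSucc_lt_last _
        have h3 : extendD D (some (w.get (f ⟨y, hy⟩), T.rel y v)) none = T.rel y v := rfl
        constructor
        · intro hr
          refine Or.inr ⟨h2, ?_⟩
          rw [h3]
          exact T.asymm _ _ hr
        · rintro (⟨hc, _⟩ | ⟨_, hnd⟩)
          · exact absurd hc h1
          · rw [h3] at hnd
            exact (rel_comm hvy.symm).mpr hnd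
      · -- y = v, x ≠ v
        rw [show y = v from hy]
        rw [hcast, hcast, hltFF x v, hltFF v x, hletterv, hletter x hx, hFv, hFx x hx]
        have h1 : ¬ (Fin.last w.length < (f ⟨x, hx⟩).castSucc) :=
          not_lt.mpr (Fin.castSucc_lt_last _).le
        have h2 : (f ⟨x, hx⟩).castSucc < Fin.last w.length := Fin.castSucc_lt_last _
        have h3 : extendD D (some (w.get (f ⟨x, hx⟩), T.rel x v)) none = T.rel x v := rfl
        constructor
        · intro hr
          exact Or.inl ⟨h2, by rw [h3]; exact hr⟩
        · rintro (⟨_, hd⟩ | ⟨hc, _⟩)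
          · rw [h3] at hd; exact hd
          · exact absurd hc h1
      · -- both ≠ v
        rw [hcast, hcast, hltFF x y, hltFF y x, hletter x hx, hletter y hy,
          hFx x hx, hFx y hy]
        have h3 : ∀ (a b : A) (P Q : Prop),
            extendD D (some (a, P)) (some (b, Q)) = D a b := fun _ _ _ _ => rfl
        rw [h3, h3]
        have h4 : T.rel x y ↔ (T.erase v).rel ⟨x, hx⟩ ⟨y, hy⟩ := Iff.rfl
        rw [h4, hrel ⟨x, hx⟩ ⟨y, hy⟩]
        rw [Fin.castSucc_lt_castSucc_iff, Fin.castSucc_lt_castSucc_iff]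

/-- Transfer a tournament along an equivalence of vertex sets. -/
def transfer (T : Tournament V) (e : V ≃ W) : Tournament W where
  rel x y := T.rel (e.symm x) (e.symm y)
  irrefl x := T.irrefl _
  total x y h := T.total _ _ (fun q => h (by simpa using congrArg e q))
  asymm x y := T.asymm _ _

theorem embeds_transfer (T : Tournament V) (e : V ≃ W) : T.Embeds (T.transfer e) :=
  ⟨e, e.injective, fun x y => by simp [transfer]⟩

theorem transfer_embeds (T : Tournament V) (e : V ≃ W) : (T.transfer e).Embeds T :=
  ⟨e.symm, e.symm.injective, fun _ _ => Iff.rfl⟩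

theorem Embeds.trans {S : Tournament V} {T : Tournament W} {R : Tournament U}
    (h1 : S.Embeds T) (h2 : T.Embeds R) : S.Embeds R := by
  obtain ⟨f, hf, hrf⟩ := h1
  obtain ⟨g, hg, hrg⟩ := h2
  exact ⟨g ∘ f, hg.comp hf, fun x y => (hrf x y).trans (hrg (f x) (f y))⟩

theorem erase_embeds (T : Tournament V) (v : V) : (T.erase v).Embeds T :=
  ⟨Subtype.val, Subtype.val_injective, fun _ _ => Iff.rfl⟩

theorem embeds_erase_of_not_mem_range {S : Tournament V} {T : Tournament W}
    {u : W} (h : S.Embeds T) (f : V → W) (hf : Function.Injective f)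
    (hrel : ∀ x y, S.rel x y ↔ T.rel (f x) (f y)) (hu : ∀ x, f x ≠ u) :
    S.Embeds (T.erase u) :=
  ⟨fun x => ⟨f x, hu x⟩, fun a b q => hf (congrArg Subtype.val q),
    fun x y => hrel x y⟩

end Tournament
namespace Tournament

variable {V : Type*}

theorem index_eq_zero_of_card_eq_zero {k : ℕ} (hk : k = 0) (S : Tournament (Fin k)) :
    S.index = 0 := by
  have : S.index ≤ 0 :=
    Nat.sInf_le ⟨[], rfl, fun x _ _ _ _ => absurd x.isLt (by omega)⟩
  omega

/-- The key finiteness: critical tournaments of index `> m` have bounded size. -/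
theorem exists_bound (m : ℕ) : ∃ N : ℕ, ∀ (k : ℕ) (S : Tournament (Fin k)),
    m < S.index → (∀ v : Fin k, (S.erase v).index ≤ m) → k ≤ N := by
  classical
  by_contra hcon
  push_neg at hcon
  choose k S h1 h2 h3 using hcon
  -- a strictly increasing sequence of indices
  set a : ℕ → ℕ := fun n => Nat.rec 0 (fun _ prev => k prev) n with ha
  have ha_succ : ∀ n, a (n + 1) = k (a n) := fun n => rfl
  have ha_mono : StrictMono a := strictMono_nat_of_lt_succ fun n => by
    rw [ha_succ]; exact h3 (a n)
  -- sizes are positive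
  have hpos : ∀ n : ℕ, 0 < k (a n) := by
    intro n
    by_contra hz
    push_neg at hz
    have hz0 : k (a n) = 0 := by omega
    have := index_eq_zero_of_card_eq_zero hz0 (S (a n))
    have := h1 (a n)
    omega
  -- words encoding the tournaments
  have hws : ∀ n : ℕ, ∃ w' : List (Option ((Fin m → Prop) × Prop)),
      Encodes (extendD (Dm m)) w' (S (a n)) := by
    intro n
    set v : Fin (k (a n)) := ⟨0, hpos n⟩
    have hid : ((S (a n)).erase v).index ≤ m := h2 (a n) v
    obtain ⟨w, hw⟩ := exists_encodes_of_index_le hid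
    exact encodes_extend hw
  choose ws hwenc using hws
  -- Higman's lemma
  haveI : IsRefl (Option ((Fin m → Prop) × Prop)) (· = ·) := ⟨fun _ => rfl⟩
  haveI : IsTrans (Option ((Fin m → Prop) × Prop)) (· = ·) := ⟨fun _ _ _ p q => p.trans q⟩
  have hfin : (Set.univ : Set (Option ((Fin m → Prop) × Prop))).Finite := Set.finite_univ
  have hpwo := hfin.partiallyWellOrderedOn (r := (· = ·))
  have hH := Set.PartiallyWellOrderedOn.partiallyWellOrderedOn_sublistForall₂
    (· = ·) hpwo
  obtain ⟨i, j, hij, hsub⟩ := hH (fun n => ⟨ws n, fun x _ => Set.mem_univ x⟩)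
  change List.SublistForall₂ (· = ·) (ws i) (ws j) at hsub
  rw [List.sublistForall₂_iff] at hsub
  obtain ⟨l, hf, hsl⟩ := hsub
  have hil : ws i = l := by
    have := List.forall₂_eq_eq_eq (α := Option ((Fin m → Prop) × Prop))
    rw [show (fun a b : Option ((Fin m → Prop) × Prop) => a = b) = (· = ·) from rfl] at hf
    rw [this] at hf
    exact hf
  subst hil
  have hemb : (S (a i)).Embeds (S (a j)) :=
    embeds_of_encodes_sublist (hwenc i) (hwenc j) hsl
  obtain ⟨f, hfinj, hfrel⟩ := hemb
  have hsz : k (a i) < k (a j) := by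
    have e1 : k (a i) = a (i + 1) := (ha_succ i).symm
    have e2 : a (i + 1) ≤ a j := ha_mono.monotone (by omega : i + 1 ≤ j)
    have e3 : a j < a (j + 1) := ha_mono (Nat.lt_succ_self j)
    rw [ha_succ] at e3
    omega
  have hnsurj : ¬ Function.Surjective f := by
    intro hs
    have := Fintype.card_le_of_surjective f hs
    simp only [Fintype.card_fin] at this
    omega
  obtain ⟨u, hu⟩ := not_forall.mp hnsurj
  have hu' : ∀ x, f x ≠ u := fun x hx => hu ⟨x, hx⟩
  have hembE : (S (a i)).Embeds ((S (a j)).erase u) :=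
    embeds_erase_of_not_mem_range ⟨f, hfinj, hfrel⟩ f hfinj hfrel hu'
  have hle : (S (a i)).index ≤ ((S (a j)).erase u).index := index_le_of_embeds hembE
  have := h2 (a j) u
  have := h1 (a i)
  omega

theorem exists_minimal_bad [Fintype V] {T : Tournament V} {m : ℕ} (h : m < T.index) :
    ∃ (k : ℕ) (S : Tournament (Fin k)), m < S.index ∧ S.Embeds T ∧
      ∀ v : Fin k, (S.erase v).index ≤ m := by
  classical
  set M := {k | ∃ S : Tournament (Fin k), m < S.index ∧ S.Embeds T} with hM
  have hMne : M.Nonempty := by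
    refine ⟨Fintype.card V, T.transfer (Fintype.equivFin V), ?_, transfer_embeds _ _⟩
    have hTle : T.index ≤ (T.transfer (Fintype.equivFin V)).index :=
      index_le_of_embeds (embeds_transfer _ _)
    omega
  obtain ⟨S, hSgt, hSemb⟩ := Nat.sInf_mem hMne
  refine ⟨sInf M, S, hSgt, hSemb, ?_⟩
  intro v
  by_contra hbad
  push_neg at hbad
  set c := Fintype.card {y : Fin (sInf M) // y ≠ v} with hc
  set E := (S.erase v).transfer (Fintype.equivFin _) with hE
  have hEgt : m < E.index := by
    have : (S.erase v).index ≤ E.index := index_le_of_embeds (embeds_transfer _ _)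
    omega
  have hEemb : E.Embeds T :=
    ((transfer_embeds _ _).trans (erase_embeds S v)).trans hSemb
  have hcM : c ∈ M := ⟨E, hEgt, hEemb⟩
  have hle := Nat.sInf_le hcM
  have hcval : c = sInf M - 1 := by
    rw [hc]
    rw [Fintype.card_subtype_compl, Fintype.card_subtype_eq, Fintype.card_fin]
  have hpos : 0 < sInf M := by
    rcases Nat.eq_zero_or_pos (sInf M) with h0 | h0
    · have := index_eq_zero_of_card_eq_zero h0 S
      omega
    · exact h0
  omega

end Tournament

noncomputable instance tournamentFintype (k : ℕ) : Fintype (Tournament (Fin k)) := by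
  classical
  exact Fintype.ofInjective (fun T => T.rel) (fun S T h => Tournament.rel_ext h)

/-- for every `m` there is a finite set `B` of finite tournaments
such that a finite tournament has inversion index at most `m` iff no member of `B`
embeds into it. -/
theorem finitely_many_bounds (m : ℕ) :
    ∃ (r : ℕ) (B : Fin r → (Σ k : ℕ, Tournament (Fin k))),
      ∀ (V : Type*) (_ : Fintype V) (T : Tournament V),
        T.index ≤ m ↔ ∀ j : Fin r, ¬ (B j).2.Embeds T := by
  classical
  obtain ⟨N, hN⟩ := Tournament.exists_bound m
  set P : (Σ k : Fin (N + 1), Tournament (Fin (k : ℕ))) → Prop := fun p => m < p.2.index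
    with hP
  set r := Fintype.card {p // P p} with hr
  set eq := (Fintype.equivFin {p // P p}).symm with heq
  refine ⟨r, fun j => ⟨((eq j).val.1 : ℕ), (eq j).val.2⟩, ?_⟩
  intro V hV T
  haveI := hV
  constructor
  · intro hTle j hemb
    have h1 : ((eq j).val.2).index ≤ T.index := Tournament.index_le_of_embeds hemb
    have h2 : m < ((eq j).val.2).index := (eq j).property
    omega
  · intro hno
    by_contra hgt
    push_neg at hgt
    obtain ⟨k, S, hSgt, hSemb, hSmin⟩ := Tournament.exists_minimal_bad hgt
    have hk : k ≤ N := hN k S hSgt hSmin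
    have hkk : k < N + 1 := by omega
    have hPp : P ⟨⟨k, hkk⟩, S⟩ := hSgt
    set j' := eq.symm ⟨⟨⟨k, hkk⟩, S⟩, hPp⟩ with hj'
    refine hno j' ?_
    have happ : eq j' = ⟨⟨⟨k, hkk⟩, S⟩, hPp⟩ :=
      eq.apply_symm_apply (⟨⟨⟨k, hkk⟩, S⟩, hPp⟩ : {p // P p})
    have h2 : (⟨((eq j').val.1 : ℕ), (eq j').val.2⟩ : Σ k : ℕ, Tournament (Fin k))
        = ⟨k, S⟩ := by rw [happ]
    show (⟨((eq j').val.1 : ℕ), (eq j').val.2⟩ : Σ k : ℕ, Tournament (Fin k)).2.Embeds T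
    rw [h2]
    exact hSemb
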